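/- Let Γ ⊂ ℝ³ be a compact set, let σ be the two-dimensional Hausdorff measure restricted to Γ, assumed finite, let κ ∈ ℂ, and let g : Γ → ℂ be bounded and σ-measurable. Then the single-layer potential φ(x) := ∫_Γ Φ(x,y;κ) g(y) dσ(y) is smooth on ℝ³ ∖ Γ and satisfies the Helmholtz equation Δφ + κ²φ = 0 on ℝ³ ∖ Γ. -/

import Mathlib

noncomputable section
open Real MeasureTheory
open scoped BigOperators Topology

abbrev V3 : Type := EuclideanSpace ℝ (Fin 3)

noncomputable def pd (i : Fin 3) (f : V3 → ℂ) : V3 → ℂ :=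
  fun x => fderiv ℝ f x (EuclideanSpace.single i (1:ℝ))

noncomputable def pdR (i : Fin 3) (f : V3 → ℝ) : V3 → ℝ :=
  fun x => fderiv ℝ f x (EuclideanSpace.single i (1:ℝ))

noncomputable def lap (f : V3 → ℂ) : V3 → ℂ :=
  fun x => ∑ i, pd i (pd i f) x

noncomputable def div3 (u : V3 → Fin 3 → ℂ) : V3 → ℂ :=
  fun x => ∑ i, pd i (fun y => u y i) x

noncomputable def grad3 (f : V3 → ℂ) : V3 → Fin 3 → ℂ :=
  fun x i => pd i f x

noncomputable def vlap (u : V3 → Fin 3 → ℂ) : V3 → Fin 3 → ℂ :=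
  fun x j => lap (fun y => u y j) x

noncomputable def curl3 (u : V3 → Fin 3 → ℂ) : V3 → Fin 3 → ℂ :=
  fun x => ![pd 1 (fun y => u y 2) x - pd 2 (fun y => u y 1) x,
             pd 2 (fun y => u y 0) x - pd 0 (fun y => u y 2) x,
             pd 0 (fun y => u y 1) x - pd 1 (fun y => u y 0) x]

def crossC (a b : Fin 3 → ℂ) : Fin 3 → ℂ :=
  ![a 1 * b 2 - a 2 * b 1, a 2 * b 0 - a 0 * b 2, a 0 * b 1 - a 1 * b 0]

def crossR (a b : Fin 3 → ℝ) : Fin 3 → ℝ :=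
  ![a 1 * b 2 - a 2 * b 1, a 2 * b 0 - a 0 * b 2, a 0 * b 1 - a 1 * b 0]

def dotR (a b : Fin 3 → ℝ) : ℝ := ∑ i, a i * b i
def dotC (a b : Fin 3 → ℂ) : ℂ := ∑ i, a i * b i
def castC (a : Fin 3 → ℝ) : Fin 3 → ℂ := fun i => (a i : ℂ)

/-- The Navier equation `μ Δu + (λ+μ) ∇(∇·u) + ω² u = 0` on a set `U`. -/
def NavierOn (μ lam ω : ℝ) (u : V3 → Fin 3 → ℂ) (U : Set V3) : Prop :=
  ∀ x ∈ U, ∀ j, (μ:ℂ) * vlap u x j + ((lam + μ : ℝ):ℂ) * grad3 (div3 u) x j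
      + ((ω^2 : ℝ):ℂ) * u x j = 0

/-- fundamental solution of the 3D Helmholtz equation -/
noncomputable def Phi (κ : ℂ) (x y : V3) : ℂ :=
  Complex.exp (Complex.I * κ * (‖x - y‖ : ℝ)) / (4 * (π:ℂ) * (‖x - y‖ : ℝ))

noncomputable def gradPhi (κ : ℂ) (x y : V3) : Fin 3 → ℂ :=
  fun i => pd i (fun z => Phi κ z y) x


set_option synthInstance.maxHeartbeats 1000000
set_option maxHeartbeats 2000000

namespace SLP
open Metric

def hCf (κ z : ℂ) : ℂ := Complex.exp (Complex.I * κ * z) / (4 * (π:ℂ) * z)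
def ACf (κ z : ℂ) : ℂ :=
  Complex.exp (Complex.I * κ * z) * (Complex.I * κ * z - 1) / (4 * (π:ℂ) * z ^ 3)
def BCf (κ z : ℂ) : ℂ :=
  Complex.exp (Complex.I * κ * z) * (-(κ^2) * z^2 - 3 * Complex.I * κ * z + 3)
    / (4 * (π:ℂ) * z ^ 4)

lemma pi_ne : ((π : ℝ) : ℂ) ≠ 0 := Complex.ofReal_ne_zero.mpr Real.pi_ne_zero

lemma hasDerivAt_hCf (κ : ℂ) {z : ℂ} (hz : z ≠ 0) : HasDerivAt (hCf κ) (z * ACf κ z) z := by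
  have h1 : HasDerivAt (fun z : ℂ => Complex.exp (Complex.I * κ * z))
      (Complex.exp (Complex.I * κ * z) * (Complex.I * κ)) z := by
    simpa using (((hasDerivAt_id z).const_mul (Complex.I * κ)).cexp)
  have h2 : HasDerivAt (fun z : ℂ => 4 * (π:ℂ) * z) (4 * (π:ℂ)) z := by
    simpa using (hasDerivAt_id z).const_mul (4 * (π:ℂ))
  have hden : 4 * (π:ℂ) * z ≠ 0 := by
    simp [Real.pi_ne_zero, hz]
  have := h1.div h2 hden
  refine this.congr_deriv (Eq.symm ?_)
  unfold ACf
  field_simp [hz, pi_ne]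
lemma hasDerivAt_ACf (κ : ℂ) {z : ℂ} (hz : z ≠ 0) : HasDerivAt (ACf κ) (BCf κ z) z := by
  have h1 : HasDerivAt (fun z : ℂ => Complex.exp (Complex.I * κ * z) * (Complex.I * κ * z - 1))
      (Complex.exp (Complex.I * κ * z) * (Complex.I * κ) * (Complex.I * κ * z - 1)
        + Complex.exp (Complex.I * κ * z) * (Complex.I * κ)) z := by
    have he : HasDerivAt (fun z : ℂ => Complex.exp (Complex.I * κ * z))
        (Complex.exp (Complex.I * κ * z) * (Complex.I * κ)) z := by
      simpa using (((hasDerivAt_id z).const_mul (Complex.I * κ)).cexp)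
    have hl : HasDerivAt (fun z : ℂ => Complex.I * κ * z - 1) (Complex.I * κ) z := by
      simpa using ((hasDerivAt_id z).const_mul (Complex.I * κ)).sub_const 1
    exact he.mul hl
  have h2 : HasDerivAt (fun z : ℂ => 4 * (π:ℂ) * z ^ 3) (4 * (π:ℂ) * (3 * z ^ 2)) z := by
    simpa [mul_assoc] using ((hasDerivAt_pow 3 z).const_mul (4 * (π:ℂ)))
  have hden : 4 * (π:ℂ) * z ^ 3 ≠ 0 := by simp [Real.pi_ne_zero, hz]
  have := h1.div h2 hden
  refine this.congr_deriv (Eq.symm ?_)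
  have hexp := Complex.exp_ne_zero (Complex.I * κ * z)
  unfold BCf
  field_simp [hz, pi_ne]
  ring_nf
  simp [Complex.I_sq]
  ring
lemma key_identity (κ : ℂ) {z : ℂ} (hz : z ≠ 0) :
    z * BCf κ z + 3 * ACf κ z + κ^2 * hCf κ z = 0 := by
  unfold hCf ACf BCf
  field_simp [hz, pi_ne]
  ring_nf

lemma hasFDerivAt_norm_sub (y : V3) {x : V3} (h : x ≠ y) :
    HasFDerivAt (fun x : V3 => ‖x - y‖) ((‖x - y‖)⁻¹ • (innerSL ℝ (x - y))) x := by
  have hu : x - y ≠ 0 := sub_ne_zero.mpr h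
  have hq : HasFDerivAt (fun x : V3 => (inner ℝ (x - y) (x - y) : ℝ))
      ((fderivInnerCLM ℝ (x - y, x - y)).comp
        ((ContinuousLinearMap.id ℝ V3 - 0).prod (ContinuousLinearMap.id ℝ V3 - 0))) x := by
    have h1 : HasFDerivAt (fun x : V3 => x - y) (ContinuousLinearMap.id ℝ V3 - 0) x := by
      simpa using (hasFDerivAt_id x).sub_const y
    exact h1.inner ℝ h1
  have hq0 : (inner ℝ (x - y) (x - y) : ℝ) ≠ 0 := by
    rw [real_inner_self_eq_norm_sq]
    exact pow_ne_zero 2 (norm_ne_zero_iff.mpr hu)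
  have hs := (Real.hasDerivAt_sqrt hq0).comp_hasFDerivAt x hq
  have heq : (fun x : V3 => Real.sqrt (inner ℝ (x - y) (x - y) : ℝ)) = fun x : V3 => ‖x - y‖ := by
    funext z
    rw [real_inner_self_eq_norm_sq, Real.sqrt_sq (norm_nonneg _)]
  simp only [Function.comp_def] at hs
  rw [heq] at hs
  refine hs.congr_fderiv (Eq.symm ?_)
  ext v
  simp only [ContinuousLinearMap.smul_apply, innerSL_apply_apply, ContinuousLinearMap.coe_comp',
    Function.comp_apply, ContinuousLinearMap.prod_apply, ContinuousLinearMap.coe_id', id_eq,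
    fderivInnerCLM_apply, smul_eq_mul, ContinuousLinearMap.coe_sub', Pi.sub_apply,
    ContinuousLinearMap.zero_apply, sub_zero]
  rw [real_inner_self_eq_norm_sq, Real.sqrt_sq (norm_nonneg _), real_inner_comm]
  have hr : ‖x - y‖ ≠ 0 := norm_ne_zero_iff.mpr hu
  field_simp
  ring

lemma comp_fd {f : V3 → ℝ} {f' : V3 →L[ℝ] ℝ} {g : ℝ → ℂ} {g' : ℂ} {x : V3} {c : ℝ}
    (hg : HasDerivAt g g' c) (hf : HasFDerivAt f f' x) (hc : c = f x) :
    HasFDerivAt (fun x => g (f x)) (f'.smulRight g') x := by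
  subst hc
  have := hg.hasFDerivAt.comp x hf
  refine this.congr_fderiv ?_
  ext v
  simp

lemma hasFDerivAt_Phi (κ : ℂ) (y : V3) {x : V3} (h : x ≠ y) :
    HasFDerivAt (fun x => Phi κ x y)
      (((‖x - y‖)⁻¹ • (innerSL ℝ (x - y))).smulRight
        (((‖x - y‖ : ℝ) : ℂ) * ACf κ ((‖x - y‖ : ℝ) : ℂ))) x := by
  have hr : ((‖x - y‖ : ℝ) : ℂ) ≠ 0 := by
    simp [norm_ne_zero_iff, sub_ne_zero.mpr h]
  have hg : HasDerivAt (fun t : ℝ => hCf κ (t : ℂ))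
      (((‖x - y‖ : ℝ) : ℂ) * ACf κ ((‖x - y‖ : ℝ) : ℂ)) ‖x - y‖ :=
    (hasDerivAt_hCf κ hr).comp_ofReal
  exact comp_fd hg (hasFDerivAt_norm_sub y h) rfl

noncomputable def Fi (κ : ℂ) (y : V3) (i : Fin 3) (x : V3) : ℂ :=
  (((x - y) i : ℝ) : ℂ) * ACf κ ((‖x - y‖ : ℝ) : ℂ)

lemma fderiv_Phi_apply (κ : ℂ) (y : V3) (i : Fin 3) {x : V3} (h : x ≠ y) :
    fderiv ℝ (fun x => Phi κ x y) x (EuclideanSpace.single i (1:ℝ)) = Fi κ y i x := by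
  rw [(hasFDerivAt_Phi κ y h).fderiv]
  have hr : ‖x - y‖ ≠ 0 := norm_ne_zero_iff.mpr (sub_ne_zero.mpr h)
  simp only [ContinuousLinearMap.smulRight_apply, ContinuousLinearMap.smul_apply,
    innerSL_apply_apply, EuclideanSpace.inner_single_right, RCLike.star_def, conj_trivial,
    smul_eq_mul, one_mul, Fi, Complex.real_smul]
  push_cast
  field_simp [Complex.ofReal_ne_zero.mpr hr]

lemma hasFDerivAt_Fi (κ : ℂ) (y : V3) (i : Fin 3) {x : V3} (h : x ≠ y) :
    HasFDerivAt (Fi κ y i)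
      ((((x - y) i : ℝ) : ℂ) • (((‖x - y‖)⁻¹ • (innerSL ℝ (x - y))).smulRight
          (BCf κ ((‖x - y‖ : ℝ) : ℂ)))
        + ACf κ ((‖x - y‖ : ℝ) : ℂ) • (Complex.ofRealCLM.comp (EuclideanSpace.proj i))) x := by
  have hr : ((‖x - y‖ : ℝ) : ℂ) ≠ 0 := by
    simp [norm_ne_zero_iff, sub_ne_zero.mpr h]
  have hc : HasFDerivAt (fun x : V3 => (((x - y) i : ℝ) : ℂ))
      (Complex.ofRealCLM.comp (EuclideanSpace.proj i)) x := by
    have h2 : (fun x : V3 => (((x - y) i : ℝ) : ℂ))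
        = fun x : V3 => (Complex.ofRealCLM.comp (EuclideanSpace.proj i : V3 →L[ℝ] ℝ)) x
            - ((y i : ℝ) : ℂ) := by
      funext z
      simp [PiLp.sub_apply]
    rw [h2]
    exact ((Complex.ofRealCLM.comp (EuclideanSpace.proj i : V3 →L[ℝ] ℝ)).hasFDerivAt).sub_const _
  have hA : HasFDerivAt (fun x : V3 => ACf κ ((‖x - y‖ : ℝ) : ℂ))
      ((((‖x - y‖)⁻¹ • (innerSL ℝ (x - y)))).smulRight (BCf κ ((‖x - y‖ : ℝ) : ℂ))) x :=
    comp_fd ((hasDerivAt_ACf κ hr).comp_ofReal) (hasFDerivAt_norm_sub y h) rfl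
  unfold Fi
  exact hc.mul hA

lemma sum_sq (u : V3) : ∑ i, (((u i : ℝ) : ℂ))^2 = (((‖u‖ : ℝ) : ℂ))^2 := by
  have : ‖u‖^2 = ∑ i, (u i)^2 := by
    rw [EuclideanSpace.norm_eq]
    rw [Real.sq_sqrt (by positivity)]
    simp [Real.norm_eq_abs, sq_abs]
  norm_cast
  exact this.symm

lemma lap_Phi (κ : ℂ) (y : V3) {x : V3} (h : x ≠ y) :
    ∑ i, fderiv ℝ (Fi κ y i) x (EuclideanSpace.single i (1:ℝ)) + κ^2 * Phi κ x y = 0 := by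
  have hr : ‖x - y‖ ≠ 0 := norm_ne_zero_iff.mpr (sub_ne_zero.mpr h)
  have hrc : ((‖x - y‖ : ℝ) : ℂ) ≠ 0 := by exact_mod_cast Complex.ofReal_ne_zero.mpr hr
  have hev : ∀ i, fderiv ℝ (Fi κ y i) x (EuclideanSpace.single i (1:ℝ))
      = (((x - y) i : ℝ) : ℂ)^2 * (((‖x - y‖ : ℝ) : ℂ))⁻¹ * BCf κ ((‖x - y‖ : ℝ) : ℂ)
        + ACf κ ((‖x - y‖ : ℝ) : ℂ) := by
    intro i
    rw [(hasFDerivAt_Fi κ y i h).fderiv]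
    have hproj : (EuclideanSpace.proj i : V3 →L[ℝ] ℝ) (EuclideanSpace.single i (1:ℝ)) = 1 := by
      have : (EuclideanSpace.proj i : V3 →L[ℝ] ℝ) (EuclideanSpace.single i (1:ℝ))
          = (EuclideanSpace.single i (1:ℝ)) i := rfl
      rw [this]
      simp [EuclideanSpace.single_apply]
    simp only [ContinuousLinearMap.add_apply, ContinuousLinearMap.smul_apply,
      ContinuousLinearMap.smulRight_apply, innerSL_apply_apply, EuclideanSpace.inner_single_right,
      RCLike.star_def, conj_trivial, ContinuousLinearMap.coe_comp', Function.comp_apply,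
      Complex.ofRealCLM_apply, hproj, smul_eq_mul, Complex.real_smul]
    push_cast
    field_simp [Complex.ofReal_ne_zero.mpr hr]
  rw [Finset.sum_congr rfl (fun i _ => hev i)]
  rw [Finset.sum_add_distrib]
  rw [← Finset.sum_mul, ← Finset.sum_mul, sum_sq (x - y)]
  have hPhi : Phi κ x y = hCf κ ((‖x - y‖ : ℝ) : ℂ) := rfl
  have hkey := key_identity κ hrc
  rw [hPhi]
  simp only [Finset.sum_const, Finset.card_univ, Fintype.card_fin, nsmul_eq_mul]
  have h2 : (((‖x - y‖ : ℝ) : ℂ))^2 * (((‖x - y‖ : ℝ) : ℂ))⁻¹ = ((‖x - y‖ : ℝ) : ℂ) := by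
    field_simp
  rw [h2]
  linear_combination hkey

def Om : Set (V3 × V3) := {p | p.1 ≠ p.2}

lemma isOpen_Om : IsOpen Om := isOpen_ne_fun continuous_fst continuous_snd

variable {E : Type*} [NormedAddCommGroup E] [NormedSpace ℂ E]

noncomputable def pfd (G : V3 × V3 → E) : V3 × V3 → (V3 →L[ℝ] E) :=
  fun p => (fderiv ℝ G p).comp (ContinuousLinearMap.inl ℝ V3 V3)

lemma infty_le : (⊤ : ℕ∞) ≤ ((⊤ : ℕ∞) : WithTop ℕ∞) := le_refl _

lemma contDiffOn_pfd {G : V3 × V3 → E} (hG : ContDiffOn ℝ (⊤:ℕ∞) G Om) :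
    ContDiffOn ℝ (⊤:ℕ∞) (pfd G) Om := by
  have h1 : ContDiffOn ℝ (⊤:ℕ∞) (fun p => fderiv ℝ G p) Om :=
    hG.fderiv_of_isOpen isOpen_Om (by exact_mod_cast le_refl _)
  have h2 := ((ContinuousLinearMap.compL ℝ V3 (V3 × V3) E).flip
      (ContinuousLinearMap.inl ℝ V3 V3)).contDiff.comp_contDiffOn h1
  exact h2

lemma hasFDerivAt_partial {G : V3 × V3 → E} {x y : V3}
    (hd : DifferentiableAt ℝ G (x, y)) :
    HasFDerivAt (fun x' => G (x', y)) (pfd G (x, y)) x :=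
  hd.hasFDerivAt.comp x (hasFDerivAt_prodMk_left x y)

variable {Γ : Set V3} {σ : Measure V3} {g : V3 → ℂ} {C : ℝ}

lemma aux_meas (hΓ : IsCompact Γ) (hres : σ.restrict Γ = σ) (hg : Measurable g)
    (K : V3 × V3 → E) (hK : ContinuousOn K Om) {x : V3} (hx : x ∉ Γ) :
    AEStronglyMeasurable (fun y => g y • K (x, y)) σ := by
  have hc : ContinuousOn (fun y => K (x, y)) Γ := by
    apply hK.comp (Continuous.continuousOn (by fun_prop))
    intro y hy hxy
    simp only [Om, Set.mem_setOf_eq] at hxy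
    exact hx (hxy ▸ hy)
  have hm1 : AEStronglyMeasurable (fun y => K (x, y)) σ := by
    rw [← hres]
    exact hc.aestronglyMeasurable hΓ.isClosed.measurableSet
  exact hg.aestronglyMeasurable.smul hm1

lemma aux_int (hΓ : IsCompact Γ) [IsFiniteMeasure σ] (hres : σ.restrict Γ = σ)
    (hae : ∀ᵐ y ∂σ, y ∈ Γ) (hg : Measurable g) (hbd : ∀ y ∈ Γ, ‖g y‖ ≤ C)
    (K : V3 × V3 → E) (hK : ContinuousOn K Om) {x : V3} (hx : x ∉ Γ) :
    Integrable (fun y => g y • K (x, y)) σ := by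
  have hsub : ({x} : Set V3) ×ˢ Γ ⊆ Om := by
    rintro ⟨a, b⟩ ⟨ha, hb⟩
    simp only [Set.mem_singleton_iff] at ha
    intro hab
    simp only [Om, Set.mem_setOf_eq] at hab
    rw [ha] at hab
    exact hx (hab ▸ hb)
  obtain ⟨M, hM⟩ := (isCompact_singleton.prod hΓ).exists_bound_of_continuousOn (hK.mono hsub)
  refine (integrable_const (C * M)).mono'
    (aux_meas hΓ hres hg K hK hx) (hae.mono fun y hy => ?_)
  exact (norm_smul_le _ _).trans (mul_le_mul (hbd y hy) (hM (x, y) ⟨rfl, hy⟩) (norm_nonneg _)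
    ((norm_nonneg _).trans (hbd y hy)))

lemma keyD (hΓ : IsCompact Γ) [IsFiniteMeasure σ] (hres : σ.restrict Γ = σ)
    (hae : ∀ᵐ y ∂σ, y ∈ Γ) (hg : Measurable g) (hbd : ∀ y ∈ Γ, ‖g y‖ ≤ C)
    [CompleteSpace E]
    (G : V3 × V3 → E) (hG : ContDiffOn ℝ (⊤:ℕ∞) G Om) {x₀ : V3} (hx₀ : x₀ ∉ Γ) :
    HasFDerivAt (fun x => ∫ y, g y • G (x, y) ∂σ) (∫ y, g y • pfd G (x₀, y) ∂σ) x₀ := by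
  have hGd : ∀ p ∈ Om, DifferentiableAt ℝ G p := fun p hp =>
    (hG.contDiffAt (isOpen_Om.mem_nhds hp)).differentiableAt (by simp)
  have hK' : ContinuousOn (pfd G) Om := (contDiffOn_pfd hG).continuousOn
  -- choose δ
  obtain ⟨ε, hε, hball⟩ := Metric.isOpen_iff.mp hΓ.isClosed.isOpen_compl x₀ hx₀
  set δ := ε / 2 with hδdef
  have hδ : 0 < δ := by positivity
  have hcb : closedBall x₀ δ ⊆ Γᶜ := fun z hz =>
    hball (lt_of_le_of_lt (mem_closedBall.mp hz) (by linarith))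
  have hsub : closedBall x₀ δ ×ˢ Γ ⊆ Om := by
    rintro ⟨a, b⟩ ⟨ha, hb⟩
    intro hab
    simp only [Om, Set.mem_setOf_eq] at hab
    exact hcb ha (hab ▸ hb)
  obtain ⟨M, hM⟩ := ((isCompact_closedBall x₀ δ).prod hΓ).exists_bound_of_continuousOn
    (hK'.mono hsub)
  apply hasFDerivAt_integral_of_dominated_of_fderiv_le (𝕜 := ℝ)
    (F := fun x y => g y • G (x, y)) (F' := fun x y => g y • pfd G (x, y))
    (bound := fun _ => C * M) (ball_mem_nhds x₀ hδ)
  · filter_upwards [hΓ.isClosed.isOpen_compl.mem_nhds hx₀] with x hx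
    exact aux_meas hΓ hres hg G hG.continuousOn hx
  · exact aux_int hΓ hres hae hg hbd G hG.continuousOn hx₀
  · exact aux_meas hΓ hres hg (pfd G) hK' hx₀
  · filter_upwards [hae] with y hy
    intro x hx
    exact (norm_smul_le _ _).trans
      (mul_le_mul (hbd y hy) (hM (x, y) ⟨ball_subset_closedBall hx, hy⟩) (norm_nonneg _)
      ((norm_nonneg _).trans (hbd y hy)))
  · exact integrable_const _
  · filter_upwards [hae] with y hy
    intro x hx
    have hmem : (x, y) ∈ Om := by
      intro hab
      simp only [Om, Set.mem_setOf_eq] at hab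
      exact hcb (ball_subset_closedBall hx) (hab ▸ hy)
    exact (hasFDerivAt_partial (hGd _ hmem)).const_smul (g y)

lemma keyC (hΓ : IsCompact Γ) [IsFiniteMeasure σ] (hres : σ.restrict Γ = σ)
    (hae : ∀ᵐ y ∂σ, y ∈ Γ) (hg : Measurable g) (hbd : ∀ y ∈ Γ, ‖g y‖ ≤ C) :
    ∀ (n : ℕ) {E : Type} [NormedAddCommGroup E] [NormedSpace ℂ E] [CompleteSpace E]
      (G : V3 × V3 → E), ContDiffOn ℝ (⊤:ℕ∞) G Om → ∀ {x₀ : V3}, x₀ ∉ Γ →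
      ContDiffAt ℝ n (fun x => ∫ y, g y • G (x, y) ∂σ) x₀ := by
  intro n
  induction n with
  | zero =>
    intro E _ _ _ G hG x₀ hx₀
    rw [show ((0:ℕ) : WithTop ℕ∞) = 0 from rfl]
    apply contDiffAt_zero.mpr
    refine ⟨Γᶜ, hΓ.isClosed.isOpen_compl.mem_nhds hx₀, fun x hx => ?_⟩
    exact ((keyD hΓ hres hae hg hbd G hG hx).continuousAt).continuousWithinAt
  | succ n ih =>
    intro E _ _ _ G hG x₀ hx₀
    rw [show ((n+1:ℕ) : WithTop ℕ∞) = (n : WithTop ℕ∞) + 1 by push_cast; ring]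
    apply contDiffAt_succ_iff_hasFDerivAt.mpr
    refine ⟨fun x => ∫ y, g y • pfd G (x, y) ∂σ,
      ⟨Γᶜ, hΓ.isClosed.isOpen_compl.mem_nhds hx₀, fun x hx =>
        keyD hΓ hres hae hg hbd G hG hx⟩, ?_⟩
    exact ih (pfd G) (contDiffOn_pfd hG) hx₀

lemma contDiffOn_hCf (κ : ℂ) : ContDiffOn ℂ (⊤:ℕ∞) (hCf κ) {z : ℂ | z ≠ 0} := by
  apply ContDiffOn.div
  · exact (Complex.contDiff_exp.comp (contDiff_const.mul contDiff_id)).contDiffOn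
  · exact (contDiff_const.mul contDiff_id).contDiffOn
  · intro z hz
    simp only [Set.mem_setOf_eq] at hz
    simp [Real.pi_ne_zero, hz]

lemma contDiffOn_normc :
    ContDiffOn ℝ (⊤:ℕ∞) (fun p : V3 × V3 => ((‖p.1 - p.2‖ : ℝ) : ℂ)) Om := by
  intro p hp
  have h1 : ContDiffAt ℝ (⊤:ℕ∞) (fun p : V3 × V3 => ‖p.1 - p.2‖) p := by
    have hsub : ContDiffAt ℝ (⊤:ℕ∞) (fun p : V3 × V3 => p.1 - p.2) p :=
      (contDiff_fst.sub contDiff_snd).contDiffAt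
    have hn : ContDiffAt ℝ (⊤:ℕ∞) (norm : V3 → ℝ) (p.1 - p.2) :=
      contDiffAt_norm ℝ (sub_ne_zero.mpr hp)
    exact hn.comp p hsub
  exact (Complex.ofRealCLM.contDiff.contDiffAt.comp p h1).contDiffWithinAt

lemma contDiffOn_G (κ : ℂ) :
    ContDiffOn ℝ (⊤:ℕ∞) (fun p : V3 × V3 => Phi κ p.1 p.2) Om := by
  have h1 := (contDiffOn_hCf κ).restrict_scalars ℝ
  have h3 := h1.comp contDiffOn_normc (fun p hp => by
    simp only [Set.mem_setOf_eq]
    exact Complex.ofReal_ne_zero.mpr (norm_ne_zero_iff.mpr (sub_ne_zero.mpr hp)))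
  exact h3

lemma contDiffOn_applyCLM {E : Type} [NormedAddCommGroup E] [NormedSpace ℂ E] (v : V3)
    {K : V3 × V3 → (V3 →L[ℝ] E)} (hK : ContDiffOn ℝ (⊤:ℕ∞) K Om) :
    ContDiffOn ℝ (⊤:ℕ∞) (fun p => K p v) Om :=
  ((ContinuousLinearMap.apply ℝ E v).contDiff.comp_contDiffOn hK)

lemma pointwise_identity (κ : ℂ) {x y : V3} (h : x ≠ y) :
    ∑ i, pfd (fun p : V3 × V3 => pfd (fun q : V3 × V3 => Phi κ q.1 q.2) p
        (EuclideanSpace.single i (1:ℝ))) (x, y) (EuclideanSpace.single i (1:ℝ))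
      + κ^2 * Phi κ x y = 0 := by
  set Gf : V3 × V3 → ℂ := fun p => Phi κ p.1 p.2 with hGf
  have hGsm := contDiffOn_G κ
  have hGd : ∀ p ∈ Om, DifferentiableAt ℝ Gf p := fun p hp =>
    ((contDiffOn_G κ).contDiffAt (isOpen_Om.mem_nhds hp)).differentiableAt
      (by simp)
  have hstep1 : ∀ (i : Fin 3), ∀ x' : V3, x' ≠ y →
      pfd Gf (x', y) (EuclideanSpace.single i (1:ℝ)) = Fi κ y i x' := by
    intro i x' hx'
    have hd : DifferentiableAt ℝ Gf (x', y) := hGd _ hx'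
    have h1 := (hasFDerivAt_partial hd).fderiv
    have h2 : (fun z => Gf (z, y)) = fun z => Phi κ z y := rfl
    rw [← h1, h2]
    exact fderiv_Phi_apply κ y i hx'
  have hsum : ∀ i : Fin 3,
      pfd (fun p : V3 × V3 => pfd Gf p (EuclideanSpace.single i (1:ℝ))) (x, y)
        (EuclideanSpace.single i (1:ℝ))
      = fderiv ℝ (Fi κ y i) x (EuclideanSpace.single i (1:ℝ)) := by
    intro i
    set G1 : V3 × V3 → ℂ := fun p => pfd Gf p (EuclideanSpace.single i (1:ℝ)) with hG1
    have hG1sm : ContDiffOn ℝ (⊤:ℕ∞) G1 Om :=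
      contDiffOn_applyCLM _ (contDiffOn_pfd hGsm)
    have hG1d : DifferentiableAt ℝ G1 (x, y) :=
      (hG1sm.contDiffAt (isOpen_Om.mem_nhds h)).differentiableAt (by simp)
    have h1 := (hasFDerivAt_partial hG1d).fderiv
    have hev : (fun x' => G1 (x', y)) =ᶠ[nhds x] Fi κ y i := by
      filter_upwards [isOpen_ne.mem_nhds h] with z hz
      exact hstep1 i z hz
    rw [← h1, hev.fderiv_eq]
  rw [Finset.sum_congr rfl (fun i _ => hsum i)]
  exact lap_Phi κ y h

end SLP

/-- the single-layer potential is smooth off `Γ` and satisfies the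
Helmholtz equation there. -/
theorem single_layer_potential_helmholtz
    (Γ : Set V3) (hΓ : IsCompact Γ)
    (σ : Measure V3) (hσ : σ = (μH[2] : Measure V3).restrict Γ)
    (hfin : σ Set.univ < ⊤)
    (κ : ℂ) (g : V3 → ℂ) (hmeas : Measurable g)
    (C : ℝ) (hbd : ∀ y ∈ Γ, ‖g y‖ ≤ C)
    (φ : V3 → ℂ) (hφ : ∀ x, φ x = ∫ y, Phi κ x y * g y ∂σ) :
    ContDiffOn ℝ (⊤ : ℕ∞) φ Γᶜ ∧
    (∀ x ∉ Γ, lap φ x + κ^2 * φ x = 0) := by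
  haveI : IsFiniteMeasure σ := ⟨hfin⟩
  have hres : σ.restrict Γ = σ := by
    rw [hσ]
    exact Measure.restrict_restrict_of_subset subset_rfl
  have hae : ∀ᵐ y ∂σ, y ∈ Γ := by
    rw [hσ]
    exact ae_restrict_mem hΓ.isClosed.measurableSet
  set Gf : V3 × V3 → ℂ := fun p => Phi κ p.1 p.2 with hGfdef
  have hGsm : ContDiffOn ℝ (⊤:ℕ∞) Gf SLP.Om := SLP.contDiffOn_G κ
  have hφeq : φ = fun x => ∫ y, g y • Gf (x, y) ∂σ := by
    funext x
    rw [hφ x]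
    congr 1
    funext y
    simp [Gf, smul_eq_mul, mul_comm]
  -- first derivative representation
  have stepA : ∀ i : Fin 3, ∀ x ∉ Γ, pd i φ x
      = ∫ y, g y • (SLP.pfd Gf (x, y) (EuclideanSpace.single i (1:ℝ))) ∂σ := by
    intro i x hx
    have hD := SLP.keyD hΓ hres hae hmeas hbd Gf hGsm hx
    rw [← hφeq] at hD
    have hint : Integrable (fun y => g y • SLP.pfd Gf (x, y)) σ :=
      SLP.aux_int hΓ hres hae hmeas hbd (SLP.pfd Gf)
        (SLP.contDiffOn_pfd hGsm).continuousOn hx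
    calc pd i φ x = (fderiv ℝ φ x) (EuclideanSpace.single i (1:ℝ)) := rfl
      _ = (∫ y, g y • SLP.pfd Gf (x, y) ∂σ) (EuclideanSpace.single i (1:ℝ)) := by
            rw [hD.fderiv]
      _ = ∫ y, (g y • SLP.pfd Gf (x, y)) (EuclideanSpace.single i (1:ℝ)) ∂σ :=
            ContinuousLinearMap.integral_apply hint _
      _ = ∫ y, g y • (SLP.pfd Gf (x, y) (EuclideanSpace.single i (1:ℝ))) ∂σ := by
            simp only [ContinuousLinearMap.smul_apply]
  constructor
  · rw [hφeq]
    rw [contDiffOn_infty]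
    intro n x hx
    exact (SLP.keyC hΓ hres hae hmeas hbd n Gf hGsm hx).contDiffWithinAt
  · intro x₀ hx₀
    -- second derivatives
    have stepB : ∀ i : Fin 3, pd i (pd i φ) x₀
        = ∫ y, g y • (SLP.pfd (fun p => SLP.pfd Gf p (EuclideanSpace.single i (1:ℝ))) (x₀, y)
            (EuclideanSpace.single i (1:ℝ))) ∂σ := by
      intro i
      set G1 : V3 × V3 → ℂ :=
        fun p => SLP.pfd Gf p (EuclideanSpace.single i (1:ℝ)) with hG1def
      have hG1sm : ContDiffOn ℝ (⊤:ℕ∞) G1 SLP.Om :=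
        SLP.contDiffOn_applyCLM _ (SLP.contDiffOn_pfd hGsm)
      have hev : pd i φ =ᶠ[nhds x₀] fun x => ∫ y, g y • G1 (x, y) ∂σ := by
        filter_upwards [hΓ.isClosed.isOpen_compl.mem_nhds hx₀] with x hx
        exact stepA i x hx
      have hD := SLP.keyD hΓ hres hae hmeas hbd G1 hG1sm hx₀
      have hint : Integrable (fun y => g y • SLP.pfd G1 (x₀, y)) σ :=
        SLP.aux_int hΓ hres hae hmeas hbd (SLP.pfd G1)
          (SLP.contDiffOn_pfd hG1sm).continuousOn hx₀
      calc pd i (pd i φ) x₀ = (fderiv ℝ (pd i φ) x₀) (EuclideanSpace.single i (1:ℝ)) := rfl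
        _ = (fderiv ℝ (fun x => ∫ y, g y • G1 (x, y) ∂σ) x₀)
              (EuclideanSpace.single i (1:ℝ)) := by rw [hev.fderiv_eq]
        _ = (∫ y, g y • SLP.pfd G1 (x₀, y) ∂σ) (EuclideanSpace.single i (1:ℝ)) := by
              rw [hD.fderiv]
        _ = ∫ y, (g y • SLP.pfd G1 (x₀, y)) (EuclideanSpace.single i (1:ℝ)) ∂σ :=
              ContinuousLinearMap.integral_apply hint _
        _ = ∫ y, g y • (SLP.pfd G1 (x₀, y) (EuclideanSpace.single i (1:ℝ))) ∂σ := by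
              simp only [ContinuousLinearMap.smul_apply]
    have hint2 : ∀ i : Fin 3, Integrable (fun y => g y •
        (SLP.pfd (fun p => SLP.pfd Gf p (EuclideanSpace.single i (1:ℝ))) (x₀, y)
          (EuclideanSpace.single i (1:ℝ)))) σ := by
      intro i
      apply SLP.aux_int hΓ hres hae hmeas hbd
        (fun p => SLP.pfd (fun p => SLP.pfd Gf p (EuclideanSpace.single i (1:ℝ))) p
          (EuclideanSpace.single i (1:ℝ))) _ hx₀
      exact (SLP.contDiffOn_applyCLM _ (SLP.contDiffOn_pfd
        (SLP.contDiffOn_applyCLM _ (SLP.contDiffOn_pfd hGsm)))).continuousOn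
    have hintG : Integrable (fun y => g y • Gf (x₀, y)) σ :=
      SLP.aux_int hΓ hres hae hmeas hbd Gf hGsm.continuousOn hx₀
    have hlap : lap φ x₀ + κ^2 * φ x₀
        = ∫ y, ((∑ i : Fin 3, g y •
            (SLP.pfd (fun p => SLP.pfd Gf p (EuclideanSpace.single i (1:ℝ))) (x₀, y)
              (EuclideanSpace.single i (1:ℝ))))
          + κ^2 • (g y • Gf (x₀, y))) ∂σ := by
      have hS : Integrable (fun y => ∑ i : Fin 3, g y •
          (SLP.pfd (fun p => SLP.pfd Gf p (EuclideanSpace.single i (1:ℝ))) (x₀, y)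
            (EuclideanSpace.single i (1:ℝ)))) σ :=
        integrable_finset_sum _ (fun i _ => hint2 i)
      have hK2 : Integrable (fun y => (κ:ℂ)^2 • (g y • Gf (x₀, y))) σ := hintG.smul (κ^2)
      rw [integral_add hS hK2]
      rw [integral_finset_sum _ (fun i _ => hint2 i), integral_smul]
      rw [show lap φ x₀ = ∑ i : Fin 3, pd i (pd i φ) x₀ from rfl]
      rw [Finset.sum_congr rfl (fun i _ => stepB i)]
      congr 1
      rw [hφeq]
      simp [smul_eq_mul]
    rw [hlap]
    rw [show (0:ℂ) = ∫ (_ : V3), (0:ℂ) ∂σ by simp]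
    apply integral_congr_ae
    filter_upwards [hae] with y hy
    have hxy : x₀ ≠ y := fun hh => hx₀ (hh ▸ hy)
    have hpt := SLP.pointwise_identity κ hxy
    calc (∑ i : Fin 3, g y •
            (SLP.pfd (fun p => SLP.pfd Gf p (EuclideanSpace.single i (1:ℝ))) (x₀, y)
              (EuclideanSpace.single i (1:ℝ))))
          + κ^2 • (g y • Gf (x₀, y))
        = g y • ((∑ i : Fin 3,
            SLP.pfd (fun p => SLP.pfd Gf p (EuclideanSpace.single i (1:ℝ))) (x₀, y)
              (EuclideanSpace.single i (1:ℝ))) + κ^2 * Gf (x₀, y)) := by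
          rw [smul_add, Finset.smul_sum]
          congr 1
          simp only [smul_eq_mul]
          ring
      _ = g y • (0:ℂ) := by rw [hpt]
      _ = 0 := smul_zero _
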